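/- Every nonzero eigenvalue of P†P is greater than or equal to 1: if P†P w = λ w with w ≠ 0 and λ ≠ 0, then λ ≥ 1. -/

import Mathlib

/-- Every nonzero eigenvalue of `P†P` is at least `1`, for an (oblique) projection `P`
on a finite-dimensional real inner product space. -/
theorem statement6 {V : Type*} [NormedAddCommGroup V] [InnerProductSpace ℝ V]
    [FiniteDimensional ℝ V] (P : V →ₗ[ℝ] V) (hP : P ∘ₗ P = P)
    (l : ℝ) (w : V) (hw : w ≠ 0) (hl : l ≠ 0)
    (heig : (LinearMap.adjoint P ∘ₗ P) w = l • w) : 1 ≤ l := by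
  have heig' : LinearMap.adjoint P (P w) = l • w := heig
  have hPw : P (P w) = P w := by
    have := congrArg (fun f : V →ₗ[ℝ] V => f w) hP
    simpa using this
  -- ⟪P w, P w⟫ = l * ⟪w, w⟫
  have h1 : (inner ℝ (P w) (P w) : ℝ) = l * inner ℝ w w := by
    have := congrArg (fun x => (inner ℝ x w : ℝ)) heig'
    simpa [LinearMap.adjoint_inner_left, real_inner_smul_left] using this
  -- ⟪P w, w⟫ = ⟪w, w⟫
  have h2 : (inner ℝ (P w) w : ℝ) = inner ℝ w w := by
    have hx : (inner ℝ (P w) (LinearMap.adjoint P (P w)) : ℝ) = inner ℝ (P w) (l • w) := by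
      rw [heig']
    rw [LinearMap.adjoint_inner_right, hPw, h1, real_inner_smul_right] at hx
    exact mul_left_cancel₀ hl hx.symm
  have hcs : (inner ℝ (P w) w : ℝ) ≤ ‖P w‖ * ‖w‖ := real_inner_le_norm _ _
  have hn1 : (inner ℝ (P w) (P w) : ℝ) = ‖P w‖ ^ 2 := real_inner_self_eq_norm_sq _
  have hn2 : (inner ℝ w w : ℝ) = ‖w‖ ^ 2 := real_inner_self_eq_norm_sq _
  have hwpos : 0 < ‖w‖ := norm_pos_iff.mpr hw
  rw [hn1, hn2] at h1
  rw [hn2] at h2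
  have hle : ‖w‖ ≤ ‖P w‖ := by nlinarith [hcs, h2, hwpos]
  have hsq : ‖w‖ ^ 2 ≤ ‖P w‖ ^ 2 := by nlinarith [hle, hwpos]
  have hp2 : 0 < ‖w‖ ^ 2 := pow_pos hwpos 2
  nlinarith [hsq, h1, hp2]
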